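/- Let γ = 1 (average-reward case) and suppose e_{t+1} = P'_t e_t where each P'_t is row-stochastic, (P*)^N is entrywise positive, and P*(i,j) > 0 ⟹ P'_t(i,j) ≥ δ' > 0 with n δ'^N < 1. Then span(e_{kN}) ≤ (1 − n δ'^N)^k span(e_0) for all k ≥ 0, so span(e_t) → 0 geometrically. -/
import Mathlib


/-- `span v = max v - min v`. -/
noncomputable def spanv {n : ℕ} (v : Fin n → ℝ) : ℝ :=
  (⨆ i, v i) - (⨅ i, v i)

lemma spanv_nonneg {n : ℕ} (v : Fin n → ℝ) : 0 ≤ spanv v := by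
  rcases Nat.eq_zero_or_pos n with h | h
  · subst h
    simp [spanv, Real.iSup_of_isEmpty, Real.iInf_of_isEmpty]
  · have : Nonempty (Fin n) := ⟨⟨0, h⟩⟩
    have h1 : (⨅ i, v i) ≤ v ⟨0, h⟩ :=
      ciInf_le (Set.Finite.bddBelow (Set.finite_range v)) _
    have h2 : v ⟨0, h⟩ ≤ ⨆ i, v i :=
      le_ciSup (Set.Finite.bddAbove (Set.finite_range v)) _
    simp only [spanv]
    linarith

/-- Span contraction for a row-stochastic matrix with entries ≥ ε. -/
lemma spanv_mulVec_le {n : ℕ} (Q : Matrix (Fin n) (Fin n) ℝ) (ε : ℝ) (hε : 0 ≤ ε)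
    (hQ : ∀ i j, ε ≤ Q i j) (hrow : ∀ i, ∑ j, Q i j = 1) (v : Fin n → ℝ) :
    spanv (Q.mulVec v) ≤ (1 - (n : ℝ) * ε) * spanv v := by
  rcases Nat.eq_zero_or_pos n with h | h
  · subst h
    simp [spanv, Real.iSup_of_isEmpty, Real.iInf_of_isEmpty]
  · have hne : Nonempty (Fin n) := ⟨⟨0, h⟩⟩
    set M := ⨆ i, v i with hM
    set m := ⨅ i, v i with hm
    have hvM : ∀ k, v k ≤ M := fun k =>
      le_ciSup (Set.Finite.bddAbove (Set.finite_range v)) k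
    have hmv : ∀ k, m ≤ v k := fun k =>
      ciInf_le (Set.Finite.bddBelow (Set.finite_range v)) k
    have hcard : ∀ i : Fin n, (n : ℝ) * ε ≤ 1 := by
      intro i
      calc (n : ℝ) * ε = ∑ j : Fin n, ε := by simp [mul_comm]
        _ ≤ ∑ j, Q i j := Finset.sum_le_sum fun j _ => hQ i j
        _ = 1 := hrow i
    have key : ∀ i, Q.mulVec v i = (∑ k, (Q i k - ε) * v k) + ε * ∑ k, v k := by
      intro i
      simp only [Matrix.mulVec, dotProduct]
      rw [Finset.mul_sum, ← Finset.sum_add_distrib]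
      exact Finset.sum_congr rfl fun k _ => by ring
    have hub : ∀ i, Q.mulVec v i ≤ (1 - (n : ℝ) * ε) * M + ε * ∑ k, v k := by
      intro i
      rw [key i]
      have : ∑ k, (Q i k - ε) * v k ≤ ∑ k, (Q i k - ε) * M :=
        Finset.sum_le_sum fun k _ =>
          mul_le_mul_of_nonneg_left (hvM k) (by linarith [hQ i k])
      have hsum : ∑ k, (Q i k - ε) * M = (1 - (n : ℝ) * ε) * M := by
        rw [← Finset.sum_mul]
        congr 1
        rw [Finset.sum_sub_distrib, hrow i]
        simp [mul_comm]
      linarith [this, hsum.le]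
    have hlb : ∀ i, (1 - (n : ℝ) * ε) * m + ε * ∑ k, v k ≤ Q.mulVec v i := by
      intro i
      rw [key i]
      have : ∑ k, (Q i k - ε) * m ≤ ∑ k, (Q i k - ε) * v k :=
        Finset.sum_le_sum fun k _ =>
          mul_le_mul_of_nonneg_left (hmv k) (by linarith [hQ i k])
      have hsum : ∑ k, (Q i k - ε) * m = (1 - (n : ℝ) * ε) * m := by
        rw [← Finset.sum_mul]
        congr 1
        rw [Finset.sum_sub_distrib, hrow i]
        simp [mul_comm]
      linarith [this, hsum.ge]
    have h1 : (⨆ i, Q.mulVec v i) ≤ (1 - (n : ℝ) * ε) * M + ε * ∑ k, v k :=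
      ciSup_le hub
    have h2 : (1 - (n : ℝ) * ε) * m + ε * ∑ k, v k ≤ ⨅ i, Q.mulVec v i :=
      le_ciInf hlb
    simp only [spanv, ← hM, ← hm]
    nlinarith [h1, h2]

theorem average_reward_span_convergence (n N : ℕ) (hN : 1 ≤ N)
    (P' : ℕ → Matrix (Fin n) (Fin n) ℝ)
    (Pstar : Matrix (Fin n) (Fin n) ℝ)
    (hPnonneg : ∀ t i j, 0 ≤ P' t i j)
    (hProw : ∀ t i, ∑ j, P' t i j = 1)
    (hSnonneg : ∀ i j, 0 ≤ Pstar i j)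
    (hSrow : ∀ i, ∑ j, Pstar i j = 1)
    (hpos : ∀ i j, 0 < (Pstar ^ N) i j)
    (δ' : ℝ) (hδ : 0 < δ')
    (hdom : ∀ t i j, 0 < Pstar i j → δ' ≤ P' t i j)
    (hnδ : (n : ℝ) * δ' ^ N < 1)
    (e : ℕ → Fin n → ℝ)
    (hdyn : ∀ t, e (t + 1) = (P' t).mulVec (e t)) :
    (∀ k : ℕ, spanv (e (k * N)) ≤ (1 - (n : ℝ) * δ' ^ N) ^ k * spanv (e 0)) ∧
      Filter.Tendsto (fun t => spanv (e t)) Filter.atTop (nhds 0) := by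
  classical
  -- product matrices: prodP s m is product P'_{s+m-1} ⋯ P'_s
  let prodP : ℕ → ℕ → Matrix (Fin n) (Fin n) ℝ := fun s m =>
    Nat.rec (motive := fun _ => ℕ → Matrix (Fin n) (Fin n) ℝ)
      (fun _ => 1) (fun _ ih s => ih (s + 1) * P' s) m s
  have prodP_zero : ∀ s, prodP s 0 = 1 := fun s => rfl
  have prodP_succ : ∀ s m, prodP s (m + 1) = prodP (s + 1) m * P' s := fun s m => rfl
  -- dynamics
  have hdynP : ∀ m s, e (s + m) = (prodP s m).mulVec (e s) := by
    intro m
    induction m with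
    | zero => intro s; simp [prodP_zero, Matrix.one_mulVec]
    | succ m ih =>
      intro s
      have : s + (m + 1) = (s + 1) + m := by omega
      rw [this, ih (s + 1), hdyn s, prodP_succ, Matrix.mulVec_mulVec]
  -- nonneg
  have hPnn : ∀ m s i j, 0 ≤ prodP s m i j := by
    intro m
    induction m with
    | zero => intro s i j; rw [prodP_zero]; by_cases h : i = j <;> simp [Matrix.one_apply, h]
    | succ m ih =>
      intro s i j
      rw [prodP_succ, Matrix.mul_apply]
      exact Finset.sum_nonneg fun k _ => mul_nonneg (ih (s + 1) i k) (hPnonneg s k j)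
  -- row sums
  have hProws : ∀ m s i, ∑ j, prodP s m i j = 1 := by
    intro m
    induction m with
    | zero => intro s i; rw [prodP_zero]; simp [Matrix.one_apply]
    | succ m ih =>
      intro s i
      rw [prodP_succ]
      simp only [Matrix.mul_apply]
      rw [Finset.sum_comm]
      calc ∑ k, ∑ j, prodP (s + 1) m i k * P' s k j
          = ∑ k, prodP (s + 1) m i k * ∑ j, P' s k j := by
            congr 1; ext k; rw [Finset.mul_sum]
        _ = ∑ k, prodP (s + 1) m i k := by simp [hProw]
        _ = 1 := ih (s + 1) i
  -- powers of Pstar are nonneg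
  have hSpownn : ∀ m i j, 0 ≤ (Pstar ^ m) i j := by
    intro m
    induction m with
    | zero => intro i j; by_cases h : i = j <;> simp [pow_zero, Matrix.one_apply, h]
    | succ m ih =>
      intro i j
      rw [pow_succ, Matrix.mul_apply]
      exact Finset.sum_nonneg fun k _ => mul_nonneg (ih i k) (hSnonneg k j)
  -- lower bound on entries
  have hlow : ∀ m s i j, 0 < (Pstar ^ m) i j → δ' ^ m ≤ prodP s m i j := by
    intro m
    induction m with
    | zero =>
      intro s i j hij
      rw [pow_zero] at hij ⊢
      rw [prodP_zero]
      by_cases h : i = j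
      · simp [Matrix.one_apply, h]
      · simp [Matrix.one_apply, h] at hij
    | succ m ih =>
      intro s i j hij
      rw [pow_succ, Matrix.mul_apply] at hij
      obtain ⟨k, -, hk⟩ := Finset.exists_lt_of_sum_lt (f := fun _ : Fin n => (0:ℝ))
        (by simpa using hij)
      have hk1 : 0 < (Pstar ^ m) i k := by
        rcases lt_or_eq_of_le (hSpownn m i k) with h | h
        · exact h
        · exfalso; rw [← h] at hk; simp at hk
      have hk2 : 0 < Pstar k j := by
        rcases lt_or_eq_of_le (hSnonneg k j) with h | h
        · exact h
        · exfalso; rw [← h] at hk; simp at hk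
      rw [prodP_succ, Matrix.mul_apply]
      have hterm : δ' ^ m * δ' ≤ prodP (s + 1) m i k * P' s k j :=
        mul_le_mul (ih (s + 1) i k hk1) (hdom s k j hk2) (le_of_lt hδ)
          (hPnn m (s + 1) i k)
      calc δ' ^ (m + 1) = δ' ^ m * δ' := pow_succ δ' m
        _ ≤ prodP (s + 1) m i k * P' s k j := hterm
        _ ≤ ∑ l, prodP (s + 1) m i l * P' s l j :=
            Finset.single_le_sum
              (fun l _ => mul_nonneg (hPnn m (s + 1) i l) (hPnonneg s l j))
              (Finset.mem_univ k)
  set β : ℝ := 1 - (n : ℝ) * δ' ^ N with hβ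
  have hβ0 : 0 < β := by simp only [hβ]; linarith
  have hβ1 : β ≤ 1 := by
    have : 0 ≤ (n : ℝ) * δ' ^ N := mul_nonneg (Nat.cast_nonneg n) (pow_nonneg hδ.le N)
    simp only [hβ]; linarith
  -- one block step
  have hstep : ∀ s, spanv (e (s + N)) ≤ β * spanv (e s) := by
    intro s
    rw [hdynP N s]
    exact spanv_mulVec_le (prodP s N) (δ' ^ N) (pow_nonneg hδ.le N)
      (fun i j => hlow N s i j (hpos i j)) (hProws N s) (e s)
  -- main bound
  have hmain : ∀ k : ℕ, spanv (e (k * N)) ≤ β ^ k * spanv (e 0) := by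
    intro k
    induction k with
    | zero => simp
    | succ k ih =>
      have heq : (k + 1) * N = k * N + N := by ring
      rw [heq]
      calc spanv (e (k * N + N)) ≤ β * spanv (e (k * N)) := hstep (k * N)
        _ ≤ β * (β ^ k * spanv (e 0)) :=
            mul_le_mul_of_nonneg_left ih hβ0.le
        _ = β ^ (k + 1) * spanv (e 0) := by ring
  refine ⟨hmain, ?_⟩
  -- monotonicity: span nonincreasing
  have hmono : ∀ s t, s ≤ t → spanv (e t) ≤ spanv (e s) := by
    intro s t hst
    obtain ⟨m, rfl⟩ := Nat.exists_eq_add_of_le hst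
    induction m with
    | zero => simp
    | succ m ih =>
      have : s + (m + 1) = (s + m) + 1 := by omega
      rw [this, hdyn (s + m)]
      calc spanv ((P' (s + m)).mulVec (e (s + m)))
          ≤ (1 - (n : ℝ) * 0) * spanv (e (s + m)) :=
            spanv_mulVec_le _ 0 le_rfl (fun i j => hPnonneg _ i j) (hProw _) _
        _ = spanv (e (s + m)) := by ring
        _ ≤ spanv (e s) := ih (Nat.le_add_right s m)
  rcases Nat.eq_zero_or_pos n with hn | hn
  · have : ∀ t, spanv (e t) = 0 := by
      intro t
      subst hn
      simp [spanv, Real.iSup_of_isEmpty, Real.iInf_of_isEmpty]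
    simp only [this]
    exact tendsto_const_nhds
  · have hβlt : β < 1 := by
      have hn' : (0 : ℝ) < n := Nat.cast_pos.mpr hn
      have : 0 < (n : ℝ) * δ' ^ N := mul_pos hn' (pow_pos hδ N)
      simp only [hβ]; linarith
    have hNdiv : Filter.Tendsto (fun t : ℕ => t / N) Filter.atTop Filter.atTop := by
      apply Filter.tendsto_atTop.mpr
      intro b
      filter_upwards [Filter.eventually_ge_atTop (b * N)] with t ht
      exact (Nat.le_div_iff_mul_le hN).mpr ht
    have hpow : Filter.Tendsto (fun t : ℕ => β ^ (t / N) * spanv (e 0))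
        Filter.atTop (nhds 0) := by
      have := (tendsto_pow_atTop_nhds_zero_of_lt_one hβ0.le hβlt).comp hNdiv
      simpa using this.mul_const (spanv (e 0))
    apply squeeze_zero (fun t => spanv_nonneg (e t)) _ hpow
    intro t
    calc spanv (e t) ≤ spanv (e (t / N * N)) := hmono _ t (Nat.div_mul_le_self t N)
      _ ≤ β ^ (t / N) * spanv (e 0) := hmain (t / N)
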